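/- The derivative at t = 0 of the function t ↦ tr(log²(φ(t))), where φ(t) = Q⁻¹ P^{1/2} exp(t S) P^{1/2} for symmetric S, equals −2 tr(log(P^{−1/2} Q P^{−1/2}) S). -/

import Mathlib

open Matrix
open scoped Classical

set_option maxHeartbeats 1000000

open NormedSpace intervalIntegral MeasureTheory Set

section Aux
attribute [local instance] Matrix.linftyOpNormedRing Matrix.linftyOpNormedAlgebra

variable {n : ℕ}

local notation "Mat" => Matrix (Fin n) (Fin n) ℝ

noncomputable def matENormedAddMonoid : ENormedAddMonoid Mat := NormedAddGroup.toENormedAddMonoid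

attribute [local instance] matENormedAddMonoid

noncomputable def matPseudoMetrizable : TopologicalSpace.PseudoMetrizableSpace Mat :=
  inferInstanceAs (TopologicalSpace.PseudoMetrizableSpace (Fin n → Fin n → ℝ))

attribute [local instance] matPseudoMetrizable

/-- concrete matrix log via integral formula -/
noncomputable def flog (B : Mat) : Mat :=
  ∫ s in (0:ℝ)..1, (B - 1) * (s • (B - 1) + 1)⁻¹

lemma posdef_conj {A C : Mat} (hA : A.PosDef) (hC : IsUnit C.det) :
    (Cᵀ * A * C).PosDef := by
  have hCinj : Function.Injective (C.mulVec) :=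
    mulVec_injective_iff_isUnit.2 ((isUnit_iff_isUnit_det C).2 hC)
  refine Matrix.PosDef.of_dotProduct_mulVec_pos ?_ (fun x hx => ?_)
  · have hAt : Aᵀ = A := by
      rw [← Matrix.conjTranspose_eq_transpose_of_trivial]; exact hA.isHermitian.eq
    show (Cᵀ * A * C).IsHermitian
    rw [Matrix.IsHermitian, Matrix.conjTranspose_eq_transpose_of_trivial,
      transpose_mul, transpose_mul, transpose_transpose, hAt, ← mul_assoc]
  · have hx' : C *ᵥ x ≠ 0 := fun h => hx (hCinj (h.trans (mulVec_zero C).symm))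
    have := hA.dotProduct_mulVec_pos hx'
    simpa [← mulVec_mulVec, dotProduct_mulVec, vecMul_transpose, star_trivial,
      Matrix.dotProduct_mulVec] using this

lemma posdef_N {B : Mat} (hB : B.PosDef) {s : ℝ} (h0 : 0 ≤ s) (h1 : s ≤ 1) :
    (s • (B - 1) + 1).PosDef := by
  refine Matrix.PosDef.of_dotProduct_mulVec_pos ?_ (fun x hx => ?_)
  · have hBh := hB.isHermitian
    simp only [Matrix.IsHermitian, conjTranspose_add, conjTranspose_smul, conjTranspose_sub,
      hBh.eq, conjTranspose_one, star_trivial]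
  · have h1' := hB.dotProduct_mulVec_pos hx
    have h2' : (0:ℝ) < star x ⬝ᵥ (1 : Mat) *ᵥ x := by
      simpa [one_mulVec] using (dotProduct_star_self_pos_iff (R := ℝ)).2 hx
    have e : star x ⬝ᵥ (s • (B - 1) + 1) *ᵥ x
        = s * (star x ⬝ᵥ B *ᵥ x) + (1 - s) * (star x ⬝ᵥ (1 : Mat) *ᵥ x) := by
      simp [add_mulVec, smul_mulVec, sub_mulVec, dotProduct_add, dotProduct_smul,
        dotProduct_sub, one_mulVec, smul_eq_mul]
      ring
    rw [e]
    rcases eq_or_lt_of_le h0 with rfl | hs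
    · simpa using h2'
    · have := mul_pos hs h1'
      have h4 : 0 ≤ (1 - s) * (star x ⬝ᵥ (1:Mat) *ᵥ x) :=
        mul_nonneg (by linarith) h2'.le
      linarith


lemma unit_N {B : Mat} (hB : B.PosDef) {s : ℝ} (h0 : 0 ≤ s) (h1 : s ≤ 1) :
    IsUnit (s • (B - 1) + 1).det :=
  (posdef_N hB h0 h1).det_pos.ne'.isUnit

lemma commute_inv_right {A N : Mat} (h : Commute A N) (hN : IsUnit N.det) :
    Commute A N⁻¹ := by
  have h1 : N * N⁻¹ = 1 := mul_nonsing_inv _ hN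
  have h2 : N⁻¹ * N = 1 := nonsing_inv_mul _ hN
  show A * N⁻¹ = N⁻¹ * A
  calc A * N⁻¹ = N⁻¹ * N * A * N⁻¹ := by rw [h2, one_mul]
    _ = N⁻¹ * A * N * N⁻¹ := by rw [mul_assoc N⁻¹ N A, ← h.eq, ← mul_assoc]
    _ = N⁻¹ * A := by rw [mul_assoc, h1, mul_one]

lemma commute_N {A B : Mat} (h : Commute A B) (s : ℝ) :
    Commute A (s • (B - 1) + 1) := by
  have h1 : Commute A (B - 1) := (h.sub_right (Commute.one_right A))
  exact (h1.smul_right s).add_right (Commute.one_right A)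

/-- derivative of matrix inverse along a curve -/
lemma hasDerivAt_inv_curve {N : ℝ → Mat} {N' : Mat} {t : ℝ}
    (h : HasDerivAt N N' t) (hu : IsUnit (N t)) :
    HasDerivAt (fun u => (N u)⁻¹) (-((N t)⁻¹ * N' * (N t)⁻¹)) t := by
  have heq : (fun u => (N u)⁻¹) = fun u => Ring.inverse (N u) := by
    funext u; exact nonsing_inv_eq_ringInverse (N u)
  rw [heq]
  have hF := (hasFDerivAt_ringInverse (𝕜 := ℝ) hu.unit).comp_hasDerivAt t h
  have hval : ((hu.unit)⁻¹ : (Mat)ˣ) = ((N t)⁻¹ : Mat) := by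
    rw [nonsing_inv_eq_ringInverse, ← Ring.inverse_unit hu.unit, IsUnit.unit_spec]
  refine HasDerivAt.congr_deriv hF ?_
  simp [ContinuousLinearMap.mulLeftRight_apply, hval]


lemma continuousOn_matinv {α : Type*} [TopologicalSpace α] {f : α → Mat} {s : Set α}
    (hf : ContinuousOn f s) (hu : ∀ x ∈ s, IsUnit (f x)) :
    ContinuousOn (fun x => (f x)⁻¹) s := by
  have heq : (fun x : α => (f x)⁻¹) = fun x => Ring.inverse (f x) :=
    funext fun x => nonsing_inv_eq_ringInverse _
  rw [heq]
  intro x hx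
  have h1 : ContinuousAt Ring.inverse (f x) := by
    have := NormedRing.inverse_continuousAt (hu x hx).unit
    rwa [IsUnit.unit_spec] at this
  exact h1.comp_continuousWithinAt (hf x hx)

lemma scalar_N_pos {a : ℝ} (ha : 0 < a) {s : ℝ} (h0 : 0 ≤ s) (h1 : s ≤ 1) :
    0 < s * (a - 1) + 1 := by
  rcases le_or_gt 1 a with h | h
  · nlinarith [mul_nonneg h0 (by linarith : (0:ℝ) ≤ a - 1)]
  · nlinarith [mul_le_mul_of_nonpos_right h1 (by linarith : a - 1 ≤ 0)]

lemma scalar_log_integral {a : ℝ} (ha : 0 < a) :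
    (∫ s in (0:ℝ)..1, (a - 1) * (s * (a - 1) + 1)⁻¹) = Real.log a := by
  have huIcc : Set.uIcc (0:ℝ) 1 = Set.Icc 0 1 := Set.uIcc_of_le zero_le_one
  have hpos : ∀ s ∈ Set.uIcc (0:ℝ) 1, 0 < s * (a - 1) + 1 := by
    intro s hs; rw [huIcc, Set.mem_Icc] at hs; exact scalar_N_pos ha hs.1 hs.2
  have hderiv : ∀ s ∈ Set.uIcc (0:ℝ) 1,
      HasDerivAt (fun u => Real.log (u * (a - 1) + 1)) ((a - 1) * (s * (a - 1) + 1)⁻¹) s := by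
    intro s hs
    have hinner : HasDerivAt (fun u : ℝ => u * (a - 1) + 1) (a - 1) s := by
      simpa using ((hasDerivAt_id s).mul_const (a - 1)).add_const 1
    have := (Real.hasDerivAt_log (hpos s hs).ne').comp s hinner
    exact (by simpa [mul_comm] using this :
      HasDerivAt (Real.log ∘ fun u => u * (a - 1) + 1) ((a - 1) * (s * (a - 1) + 1)⁻¹) s)
  have hint : IntervalIntegrable (fun s => (a - 1) * (s * (a - 1) + 1)⁻¹) volume 0 1 := by
    apply ContinuousOn.intervalIntegrable
    exact (continuousOn_const.mul ((Continuous.continuousOn (by continuity)).inv₀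
      (fun s hs => (hpos s hs).ne')))
  have := intervalIntegral.integral_eq_sub_of_hasDerivAt hderiv hint
  simpa using this

noncomputable def entryCLM (i j : Fin n) : Mat →L[ℝ] ℝ :=
  LinearMap.toContinuousLinearMap
    { toFun := fun A => A i j, map_add' := fun _ _ => rfl, map_smul' := fun _ _ => rfl }

lemma integral_entry {f : ℝ → Mat} {a b : ℝ} (hf : IntervalIntegrable f volume a b)
    (i j : Fin n) : (∫ s in a..b, f s) i j = ∫ s in a..b, f s i j :=
  ((entryCLM i j).intervalIntegral_comp_comm hf).symm

noncomputable def conjCLM (U V : Mat) : Mat →L[ℝ] Mat :=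
  LinearMap.toContinuousLinearMap
    { toFun := fun X => U * X * V,
      map_add' := by intros; noncomm_ring
      map_smul' := by intros; simp [Matrix.mul_smul, Matrix.smul_mul] }

lemma matIntegral_conj {f : ℝ → Mat} {a b : ℝ} (hf : IntervalIntegrable f volume a b)
    (U V : Mat) : (∫ s in a..b, U * f s * V) = U * (∫ s in a..b, f s) * V :=
  ((conjCLM U V).intervalIntegral_comp_comm hf)

noncomputable def traceMulCLM (L R : Mat) : Mat →L[ℝ] ℝ :=
  LinearMap.toContinuousLinearMap
    { toFun := fun X => Matrix.trace (L * X * R),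
      map_add' := by intros; simp [Matrix.mul_add, Matrix.add_mul]
      map_smul' := by intros; simp [Matrix.mul_smul, Matrix.smul_mul] }

lemma integral_traceMul {f : ℝ → Mat} {a b : ℝ} (hf : IntervalIntegrable f volume a b)
    (L R : Mat) :
    (∫ s in a..b, Matrix.trace (L * f s * R)) = Matrix.trace (L * (∫ s in a..b, f s) * R) :=
  ((traceMulCLM L R).intervalIntegral_comp_comm hf)

lemma integral_diagonal {g : ℝ → Fin n → ℝ} {a b : ℝ}
    (hg : IntervalIntegrable (fun s => (diagonal (g s) : Mat)) volume a b) :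
    (∫ s in a..b, (diagonal (g s) : Mat)) = diagonal (fun i => ∫ s in a..b, g s i) := by
  ext i j
  rw [integral_entry hg i j]
  by_cases h : i = j
  · subst h; simp [Matrix.diagonal_apply_eq]
  · simp [Matrix.diagonal_apply_ne _ h]


noncomputable def diagCLM : (Fin n → ℝ) →L[ℝ] Mat :=
  LinearMap.toContinuousLinearMap
    { toFun := fun v => diagonal v
      map_add' := fun _ _ => (Matrix.diagonal_add _ _).symm
      map_smul' := fun _ _ => (Matrix.diagonal_smul _ _) }

lemma continuousOn_diag {α : Type*} [TopologicalSpace α] {g : α → Fin n → ℝ} {s : Set α}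
    (hg : ∀ i, ContinuousOn (fun x => g x i) s) :
    ContinuousOn (fun x => (diagonal (g x) : Mat)) s := by
  have h1 : ContinuousOn g s := continuousOn_pi.2 hg
  have := diagCLM.continuous.comp_continuousOn h1
  exact this

lemma flog_eq {B : Mat} (hB : B.PosDef) :
    flog B = (hB.1.eigenvectorUnitary : Mat)
        * diagonal (fun i => Real.log (hB.1.eigenvalues i))
        * star (hB.1.eigenvectorUnitary : Mat) := by
  set U : Mat := (hB.1.eigenvectorUnitary : Mat) with hU
  set lam : Fin n → ℝ := hB.1.eigenvalues with hlam
  have hU1 : U * star U = 1 := Matrix.mem_unitaryGroup_iff.mp (hB.1.eigenvectorUnitary).2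
  have hU2 : star U * U = 1 := Matrix.mem_unitaryGroup_iff'.mp (hB.1.eigenvectorUnitary).2
  have hUinv : U⁻¹ = star U := Matrix.inv_eq_right_inv hU1
  have hsUinv : (star U)⁻¹ = U := Matrix.inv_eq_right_inv hU2
  have hlam_pos : ∀ i, 0 < lam i := fun i => hB.eigenvalues_pos i
  have hspec : B = U * diagonal lam * star U := by
    have := hB.1.spectral_theorem
    simpa [Function.comp] using this
  have hBm1 : B - 1 = U * diagonal (fun i => lam i - 1) * star U := by
    rw [hspec]
    have : (diagonal (fun i => lam i - 1) : Mat) = diagonal lam - 1 := by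
      ext i j
      rcases eq_or_ne i j with rfl | h
      · simp
      · simp [Matrix.diagonal_apply_ne _ h, Matrix.one_apply_ne h]
    rw [this, Matrix.mul_sub, Matrix.sub_mul, mul_one, hU1]
  have hN : ∀ s : ℝ, s • (B - 1) + 1
      = U * diagonal (fun i => s * (lam i - 1) + 1) * star U := by
    intro s
    rw [hBm1]
    have : (diagonal (fun i => s * (lam i - 1) + 1) : Mat)
        = s • diagonal (fun i => lam i - 1) + 1 := by
      ext i j
      rcases eq_or_ne i j with rfl | h
      · simp
      · simp [Matrix.diagonal_apply_ne _ h, Matrix.one_apply_ne h]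
    rw [this, Matrix.mul_add, Matrix.add_mul, mul_one, hU1, Matrix.mul_smul, Matrix.smul_mul]
  have hinteg : ∀ s ∈ Set.uIcc (0:ℝ) 1, (B - 1) * (s • (B - 1) + 1)⁻¹
      = U * diagonal (fun i => (lam i - 1) * (s * (lam i - 1) + 1)⁻¹) * star U := by
    intro s hs
    rw [Set.uIcc_of_le zero_le_one, Set.mem_Icc] at hs
    have hNinv : (s • (B - 1) + 1)⁻¹
        = U * diagonal (fun i => (s * (lam i - 1) + 1)⁻¹) * star U := by
      have hdinv : (diagonal (fun i => s * (lam i - 1) + 1) : Mat)⁻¹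
          = diagonal (fun i => (s * (lam i - 1) + 1)⁻¹) := by
        apply Matrix.inv_eq_right_inv
        rw [Matrix.diagonal_mul_diagonal]
        have : (fun i => (s * (lam i - 1) + 1) * (s * (lam i - 1) + 1)⁻¹)
            = fun _ : Fin n => (1:ℝ) := by
          funext i
          exact mul_inv_cancel₀ (scalar_N_pos (hlam_pos i) hs.1 hs.2).ne'
        rw [this, Matrix.diagonal_one]
      rw [hN s, Matrix.mul_inv_rev, Matrix.mul_inv_rev, hUinv, hsUinv, hdinv, ← mul_assoc]
    rw [hNinv, hBm1]
    calc U * diagonal (fun i => lam i - 1) * star U *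
          (U * diagonal (fun i => (s * (lam i - 1) + 1)⁻¹) * star U)
        = U * (diagonal (fun i => lam i - 1) * (star U * U)
            * diagonal (fun i => (s * (lam i - 1) + 1)⁻¹)) * star U := by
          simp only [mul_assoc]
      _ = U * diagonal (fun i => (lam i - 1) * (s * (lam i - 1) + 1)⁻¹) * star U := by
          rw [hU2, mul_one, Matrix.diagonal_mul_diagonal]
  have hcontg : ContinuousOn
      (fun s : ℝ => (diagonal (fun i => (lam i - 1) * (s * (lam i - 1) + 1)⁻¹) : Mat))
      (Set.uIcc (0:ℝ) 1) := by
    apply continuousOn_diag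
    intro i
    apply ContinuousOn.mul continuousOn_const
    apply ContinuousOn.inv₀
      (Continuous.continuousOn ((continuous_id.mul continuous_const).add continuous_const))
    intro s hs
    rw [Set.uIcc_of_le zero_le_one, Set.mem_Icc] at hs
    exact (scalar_N_pos (hlam_pos i) hs.1 hs.2).ne'
  have hint : IntervalIntegrable
      (fun s : ℝ => (diagonal (fun i => (lam i - 1) * (s * (lam i - 1) + 1)⁻¹) : Mat))
      volume 0 1 := hcontg.intervalIntegrable
  have hflog : flog B = ∫ s in (0:ℝ)..1,
      U * (diagonal (fun i => (lam i - 1) * (s * (lam i - 1) + 1)⁻¹) : Mat) * star U := by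
    unfold flog
    apply intervalIntegral.integral_congr
    intro s hs
    exact hinteg s hs
  rw [hflog, matIntegral_conj hint, integral_diagonal hint]
  have : (fun i => ∫ s in (0:ℝ)..1, (lam i - 1) * (s * (lam i - 1) + 1)⁻¹)
      = fun i => Real.log (lam i) := funext fun i => scalar_log_integral (hlam_pos i)
  rw [this]


lemma flog_isSymm {B : Mat} (hB : B.PosDef) : (flog B).IsSymm := by
  have hstar : (star (hB.1.eigenvectorUnitary : Mat)) = (hB.1.eigenvectorUnitary : Mat)ᵀ := by
    rw [Matrix.star_eq_conjTranspose, Matrix.conjTranspose_eq_transpose_of_trivial]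
  rw [Matrix.IsSymm, flog_eq hB, hstar, transpose_mul, transpose_mul, transpose_transpose,
    Matrix.diagonal_transpose, mul_assoc]

lemma exp_flog {B : Mat} (hB : B.PosDef) : NormedSpace.exp (flog B) = B := by
  set U : Mat := (hB.1.eigenvectorUnitary : Mat) with hU
  set lam : Fin n → ℝ := hB.1.eigenvalues with hlam
  have hU1 : U * star U = 1 := Matrix.mem_unitaryGroup_iff.mp (hB.1.eigenvectorUnitary).2
  have hUinv : U⁻¹ = star U := Matrix.inv_eq_right_inv hU1
  have hUunit : IsUnit U := by
    refine (Matrix.isUnit_iff_isUnit_det U).2 (IsUnit.of_mul_eq_one (det (star U)) ?_)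
    rw [← Matrix.det_mul, hU1, Matrix.det_one]
  have hspec : B = U * diagonal lam * star U := by
    have := hB.1.spectral_theorem
    simpa [Function.comp] using this
  rw [flog_eq hB, ← hU, ← hlam, ← hUinv, Matrix.exp_conj U _ hUunit, Matrix.exp_diagonal,
    Pi.exp_def]
  have : (fun i => NormedSpace.exp (Real.log (lam i))) = lam := by
    funext i
    rw [← Real.exp_eq_exp_ℝ]
    exact Real.exp_log (hB.eigenvalues_pos i)
  rw [this, hUinv, ← hspec]

lemma commute_flog {B : Mat} (hB : B.PosDef) : Commute B (flog B) := by
  conv_lhs => rw [← exp_flog hB]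
  exact (Commute.refl (flog B)).exp_left


noncomputable def traceCLM : Mat →L[ℝ] ℝ :=
  LinearMap.toContinuousLinearMap
    { toFun := fun X => Matrix.trace X
      map_add' := by intros; simp
      map_smul' := by intros; simp }

/-- algebraic trace rearrangement -/
lemma trace_step {L R Bd M : Mat} (s : ℝ) (hLM : Commute L M) (hRM : Commute (R - 1) M) :
    Matrix.trace (L * (Bd * M + (R - 1) * -(M * (s • Bd) * M)))
      = Matrix.trace (L * (M - s • ((R - 1) * (M * M))) * Bd) := by
  have hC : Commute (L * (R - 1)) M := hLM.mul_left hRM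
  have hC' : M * L * (R - 1) = L * (R - 1) * M := by rw [mul_assoc]; exact hC.eq.symm
  have e1 : Matrix.trace (L * (Bd * M)) = Matrix.trace (L * M * Bd) := by
    calc Matrix.trace (L * (Bd * M)) = Matrix.trace (L * Bd * M) := by simp only [mul_assoc]
      _ = Matrix.trace (M * (L * Bd)) := trace_mul_comm _ _
      _ = Matrix.trace (M * L * Bd) := by simp only [mul_assoc]
      _ = Matrix.trace (L * M * Bd) := by rw [← hLM.eq]
  have e3 : Matrix.trace (L * ((R - 1) * (M * Bd * M)))
      = Matrix.trace (L * ((R - 1) * (M * M)) * Bd) := by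
    calc Matrix.trace (L * ((R - 1) * (M * Bd * M)))
        = Matrix.trace (L * (R - 1) * M * Bd * M) := by simp only [mul_assoc]
      _ = Matrix.trace (M * (L * (R - 1) * M * Bd)) := trace_mul_comm _ _
      _ = Matrix.trace (M * L * (R - 1) * M * Bd) := by simp only [mul_assoc]
      _ = Matrix.trace (L * (R - 1) * M * M * Bd) := by rw [hC']
      _ = Matrix.trace (L * ((R - 1) * (M * M)) * Bd) := by simp only [mul_assoc]
  have e2 : Matrix.trace (L * ((R - 1) * -(M * (s • Bd) * M)))
      = -(s • Matrix.trace (L * ((R - 1) * (M * M)) * Bd)) := by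
    have hsmul : M * (s • Bd) * M = s • (M * Bd * M) := by
      simp [Matrix.mul_smul, Matrix.smul_mul]
    rw [hsmul]
    have h4 : L * ((R - 1) * -(s • (M * Bd * M))) = -(s • (L * ((R - 1) * (M * Bd * M)))) := by
      simp [Matrix.mul_smul, Matrix.mul_neg]
    rw [h4, trace_neg, trace_smul, e3]
  rw [Matrix.mul_add, trace_add, e1, e2]
  generalize (R - 1) * (M * M) = X
  rw [Matrix.mul_sub, Matrix.sub_mul, trace_sub, Matrix.mul_smul, Matrix.smul_mul, trace_smul]
  abel

theorem key_deriv (R W : Mat) (hR : R.PosDef) (hW : W.IsSymm) :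
    deriv (fun t : ℝ => Matrix.trace
        (flog (NormedSpace.exp (t • W) * R * NormedSpace.exp (t • W))
          * flog (NormedSpace.exp (t • W) * R * NormedSpace.exp (t • W)))) 0
      = 4 * Matrix.trace (flog R * W) := by
  classical
  set E : ℝ → Mat := fun t => NormedSpace.exp (t • W) with hE
  have hEd : ∀ t, HasDerivAt E (E t * W) t := fun t => hasDerivAt_exp_smul_const (𝕂 := ℝ) W t
  have hEd' : ∀ t, HasDerivAt E (W * E t) t := fun t => hasDerivAt_exp_smul_const' (𝕂 := ℝ) W t
  have hEc : Continuous E := continuous_iff_continuousAt.2 fun t => (hEd t).continuousAt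
  have hEsymm : ∀ t, (E t).IsSymm := by
    intro t
    apply Matrix.IsSymm.exp
    show (t • W)ᵀ = t • W
    rw [Matrix.transpose_smul, hW]
  have hEdet : ∀ t, IsUnit (E t).det :=
    fun t => (Matrix.isUnit_iff_isUnit_det _).1 (Matrix.isUnit_exp _)
  set Bt : ℝ → Mat := fun t => E t * R * E t with hBt
  have hBc : Continuous Bt := (hEc.mul continuous_const).mul hEc
  have hBpos : ∀ t, (Bt t).PosDef := by
    intro t
    have := posdef_conj hR (hEdet t)
    rwa [hEsymm t] at this
  have hB0 : Bt 0 = R := by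
    show E 0 * R * E 0 = R
    have hE0 : E 0 = 1 := by
      show NormedSpace.exp ((0:ℝ) • W) = 1
      rw [zero_smul, NormedSpace.exp_zero]
    rw [hE0, one_mul, mul_one]
  set Bd : ℝ → Mat := fun t => W * Bt t + Bt t * W with hBd
  have hBdc : Continuous Bd := (continuous_const.mul hBc).add (hBc.mul continuous_const)
  have hBder : ∀ t, HasDerivAt Bt (Bd t) t := by
    intro t
    have h1 : HasDerivAt (fun u => E u * R) (W * E t * R) t := (hEd' t).mul_const R
    have h2 := h1.mul (hEd t)
    refine HasDerivAt.congr_deriv h2 (Eq.symm ?_)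
    show W * (E t * R * E t) + (E t * R * E t) * W = W * E t * R * E t + E t * R * (E t * W)
    simp only [mul_assoc]
  set Ms : ℝ → ℝ → Mat := fun t s => (s • (Bt t - 1) + 1)⁻¹ with hMs
  set F : ℝ → ℝ → Mat := fun t s => (Bt t - 1) * Ms t s with hF
  set F' : ℝ → ℝ → Mat :=
    fun t s => Bd t * Ms t s + (Bt t - 1) * -(Ms t s * (s • Bd t) * Ms t s) with hF'
  have hNpos : ∀ t : ℝ, ∀ s ∈ Set.Icc (0:ℝ) 1, (s • (Bt t - 1) + 1).PosDef :=
    fun t s hs => posdef_N (hBpos t) hs.1 hs.2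
  have hFder : ∀ s ∈ Set.Icc (0:ℝ) 1, ∀ t : ℝ, HasDerivAt (fun u => F u s) (F' t s) t := by
    intro s hs t
    have hN : HasDerivAt (fun u => s • (Bt u - 1) + 1) (s • Bd t) t :=
      (((hBder t).sub_const 1).const_smul s).add_const 1
    have hMder : HasDerivAt (fun u => Ms u s) (-(Ms t s * (s • Bd t) * Ms t s)) t :=
      hasDerivAt_inv_curve hN (hNpos t s hs).isUnit
    exact ((hBder t).sub_const 1).mul hMder
  have hsub : Set.uIoc (0:ℝ) 1 ⊆ Set.Icc 0 1 := by
    rw [Set.uIoc_of_le zero_le_one]; exact Set.Ioc_subset_Icc_self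
  have huIcc : Set.uIcc (0:ℝ) 1 = Set.Icc 0 1 := Set.uIcc_of_le zero_le_one
  -- joint continuity and bound
  have hMcont : ContinuousOn (fun p : ℝ × ℝ => Ms p.1 p.2)
      (Set.Icc (-1:ℝ) 1 ×ˢ Set.Icc (0:ℝ) 1) := by
    have hNcont : Continuous (fun p : ℝ × ℝ => p.2 • (Bt p.1 - 1) + 1) :=
      (continuous_snd.smul ((hBc.comp continuous_fst).sub continuous_const)).add continuous_const
    exact continuousOn_matinv hNcont.continuousOn
      (fun p hp => (hNpos p.1 p.2 hp.2).isUnit)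
  have hF'cont : ContinuousOn (fun p : ℝ × ℝ => F' p.1 p.2)
      (Set.Icc (-1:ℝ) 1 ×ˢ Set.Icc (0:ℝ) 1) := by
    have cBt2 : Continuous (fun p : ℝ × ℝ => Bt p.1) := hBc.comp continuous_fst
    have cBd2 : Continuous (fun p : ℝ × ℝ => Bd p.1) := hBdc.comp continuous_fst
    exact (cBd2.continuousOn.mul hMcont).add
      (((cBt2.sub continuous_const).continuousOn).mul
        (((hMcont.mul (continuous_snd.smul cBd2).continuousOn).mul hMcont).neg))
  obtain ⟨C, hC⟩ := (isCompact_Icc.prod isCompact_Icc).exists_bound_of_continuousOn hF'cont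
  -- continuity in s for fixed t
  have hM0cont : ∀ t, ContinuousOn (fun s => Ms t s) (Set.Icc (0:ℝ) 1) := by
    intro t
    have hNcont : Continuous (fun s : ℝ => s • (Bt t - 1) + 1) :=
      (continuous_id.smul continuous_const).add continuous_const
    exact continuousOn_matinv hNcont.continuousOn (fun s hs => (hNpos t s hs).isUnit)
  have hFscont : ∀ t, ContinuousOn (fun s => F t s) (Set.Icc (0:ℝ) 1) :=
    fun t => continuousOn_const.mul (hM0cont t)
  have hF'scont : ContinuousOn (fun s => F' 0 s) (Set.Icc (0:ℝ) 1) := by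
    exact (continuousOn_const.mul (hM0cont 0)).add
      (continuousOn_const.mul
        ((((hM0cont 0).mul ((continuous_id.smul continuous_const).continuousOn)).mul
          (hM0cont 0)).neg))
  -- dominated differentiation under the integral
  have hdom : IntervalIntegrable (F' 0) volume 0 1 ∧
      HasDerivAt (fun t => ∫ s in (0:ℝ)..1, F t s) (∫ s in (0:ℝ)..1, F' 0 s) 0 := by
    refine intervalIntegral.hasDerivAt_integral_of_dominated_loc_of_deriv_le
      (bound := fun _ => C) (Metric.ball_mem_nhds (0:ℝ) one_pos) ?_ ?_ ?_ ?_ ?_ ?_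
    · exact Filter.Eventually.of_forall fun x =>
        ((hFscont x).mono hsub).aestronglyMeasurable measurableSet_uIoc
    · exact ((hFscont 0).mono huIcc.subset).intervalIntegrable
    · exact ((hF'scont).mono hsub).aestronglyMeasurable measurableSet_uIoc
    · refine Filter.Eventually.of_forall fun s hs => fun x hx => ?_
      have hx' : x ∈ Set.Icc (-1:ℝ) 1 := by
        rw [Metric.mem_ball, Real.dist_eq, sub_zero] at hx
        constructor <;> [linarith [neg_abs_le x]; linarith [le_abs_self x]]
      exact hC (x, s) ⟨hx', hsub hs⟩
    · exact intervalIntegrable_const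
    · exact Filter.Eventually.of_forall fun s hs => fun x _ => hFder s (hsub hs) x
  obtain ⟨hFint', hG⟩ := hdom
  set L : Mat := flog R with hL
  set G' : Mat := ∫ s in (0:ℝ)..1, F' 0 s with hG'
  have hG2 : HasDerivAt (fun t => flog (Bt t)) G' 0 := hG
  have hflog0 : flog (Bt 0) = L := by rw [hB0]
  have hmul : HasDerivAt (fun t => flog (Bt t) * flog (Bt t)) (G' * L + L * G') 0 := by
    have := hG2.mul hG2
    rwa [hflog0] at this
  have htr : HasDerivAt (fun t => Matrix.trace (flog (Bt t) * flog (Bt t)))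
      (Matrix.trace (G' * L + L * G')) 0 :=
    (traceCLM.hasFDerivAt.comp_hasDerivAt 0 hmul : _)
  -- commutation facts at t = 0
  have hRdet : IsUnit R.det := hR.det_pos.ne'.isUnit
  have hcommRL : Commute R L := commute_flog hR
  have hMs0 : ∀ s : ℝ, Ms 0 s = (s • (R - 1) + 1)⁻¹ := by
    intro s; show (s • (Bt 0 - 1) + 1)⁻¹ = _; rw [hB0]
  have hLMs : ∀ s ∈ Set.Icc (0:ℝ) 1, Commute L (Ms 0 s) := by
    intro s hs
    rw [hMs0 s]
    exact commute_inv_right (commute_N hcommRL.symm s) (unit_N hR hs.1 hs.2)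
  have hRMs : ∀ s ∈ Set.Icc (0:ℝ) 1, Commute (R - 1) (Ms 0 s) := by
    intro s hs
    rw [hMs0 s]
    exact commute_inv_right
      (commute_N ((Commute.refl R).sub_left (Commute.one_left R)) s) (unit_N hR hs.1 hs.2)
  -- FTC : ∫ Kf = R⁻¹
  set Kf : ℝ → Mat := fun s => Ms 0 s - s • ((R - 1) * (Ms 0 s * Ms 0 s)) with hKf
  have hKfcont : ContinuousOn Kf (Set.Icc (0:ℝ) 1) :=
    (hM0cont 0).sub ((continuous_id.continuousOn).smul
      (continuousOn_const.mul ((hM0cont 0).mul (hM0cont 0))))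
  have hKfint : IntervalIntegrable Kf volume 0 1 :=
    (hKfcont.mono huIcc.subset).intervalIntegrable
  have hψ : ∀ s ∈ Set.uIcc (0:ℝ) 1,
      HasDerivAt (fun u : ℝ => u • Ms 0 u) (Kf s) s := by
    intro s hs
    rw [huIcc] at hs
    have hcur : HasDerivAt (fun u : ℝ => u • (R - 1) + 1) (R - 1) s := by
      have := ((hasDerivAt_id' s).smul_const (R - 1)).add_const (1 : Mat)
      simp only [one_smul] at this
      exact this
    have hMder : HasDerivAt (fun u : ℝ => (u • (R - 1) + 1)⁻¹)
        (-((s • (R - 1) + 1)⁻¹ * (R - 1) * (s • (R - 1) + 1)⁻¹)) s :=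
      hasDerivAt_inv_curve hcur (posdef_N hR hs.1 hs.2).isUnit
    have hprod := (hasDerivAt_id s).smul hMder
    have hfun : (fun u : ℝ => u • Ms 0 u) = fun y : ℝ => id y • ((y • (R - 1) + 1)⁻¹ : Mat) :=
      funext fun u => by rw [id_eq, hMs0 u]
    rw [hfun]
    refine HasDerivAt.congr_deriv hprod (Eq.symm ?_)
    show Ms 0 s - s • ((R - 1) * (Ms 0 s * Ms 0 s)) = _
    have hcm : (s • (R - 1) + 1)⁻¹ * (R - 1) = (R - 1) * (s • (R - 1) + 1)⁻¹ := by
      have := hRMs s hs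
      rw [hMs0 s] at this
      exact this.eq.symm
    have heq : (s • (R - 1) + 1)⁻¹ * (R - 1) * (s • (R - 1) + 1)⁻¹
        = (R - 1) * ((s • (R - 1) + 1)⁻¹ * (s • (R - 1) + 1)⁻¹) := by
      rw [hcm, mul_assoc]
    rw [hMs0 s, id_eq, one_smul, smul_neg, heq]
    exact sub_eq_neg_add _ _
  have hintK : (∫ s in (0:ℝ)..1, Kf s) = R⁻¹ := by
    rw [intervalIntegral.integral_eq_sub_of_hasDerivAt hψ hKfint]
    rw [hMs0 1, hMs0 0]
    simp only [one_smul, zero_smul, sub_zero]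
    norm_num
  -- trace computation
  have hBd0 : Bd 0 = W * R + R * W := by show W * Bt 0 + Bt 0 * W = _; rw [hB0]
  have htrL : Matrix.trace (L * G') = Matrix.trace (L * R⁻¹ * Bd 0) := by
    calc Matrix.trace (L * G') = Matrix.trace (L * G' * 1) := by rw [mul_one]
      _ = ∫ s in (0:ℝ)..1, Matrix.trace (L * F' 0 s * 1) := (integral_traceMul hFint' L 1).symm
      _ = ∫ s in (0:ℝ)..1, Matrix.trace (L * Kf s * Bd 0) := by
          apply intervalIntegral.integral_congr
          intro s hs
          rw [huIcc] at hs
          have hstep := trace_step (L := L) (R := R) (Bd := Bd 0) (M := Ms 0 s) s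
            (hLMs s hs) (hRMs s hs)
          have hFeq : F' 0 s = Bd 0 * Ms 0 s + (R - 1) * -(Ms 0 s * (s • Bd 0) * Ms 0 s) := by
            show Bd 0 * Ms 0 s + (Bt 0 - 1) * -(Ms 0 s * (s • Bd 0) * Ms 0 s) = _
            rw [hB0]
          show (L * F' 0 s * 1).trace = (L * Kf s * Bd 0).trace
          rw [mul_one, hFeq, hstep]
      _ = Matrix.trace (L * (∫ s in (0:ℝ)..1, Kf s) * Bd 0) := integral_traceMul hKfint L (Bd 0)
      _ = Matrix.trace (L * R⁻¹ * Bd 0) := by rw [hintK]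
  have hfinal : Matrix.trace (L * R⁻¹ * Bd 0) = 2 * Matrix.trace (L * W) := by
    rw [hBd0, Matrix.mul_add, trace_add]
    have t2 : L * R⁻¹ * (R * W) = L * W := by
      rw [← mul_assoc, mul_assoc L R⁻¹ R, nonsing_inv_mul R hRdet, mul_one]
    have t1 : Matrix.trace (L * R⁻¹ * (W * R)) = Matrix.trace (L * W) := by
      calc Matrix.trace (L * R⁻¹ * (W * R)) = Matrix.trace (L * R⁻¹ * W * R) := by
            simp only [mul_assoc]
        _ = Matrix.trace (R * (L * R⁻¹) * W) := Matrix.trace_mul_cycle (L * R⁻¹) W R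
        _ = Matrix.trace (L * W) := by
            rw [← mul_assoc, hcommRL.eq, mul_assoc L R R⁻¹, mul_nonsing_inv R hRdet, mul_one]
    rw [t1, t2]
    ring
  have hderiv : deriv (fun t => Matrix.trace (flog (Bt t) * flog (Bt t))) 0
      = 4 * Matrix.trace (flog R * W) := by
    rw [htr.deriv, trace_add, Matrix.trace_mul_comm G' L, htrL, hfinal]
    ring
  exact hderiv

end Aux

open scoped MatrixOrder

/-- The symmetric positive definite square root of a positive definite matrix
(junk value `1` otherwise). -/
noncomputable def msqrt {n : ℕ} (P : Matrix (Fin n) (Fin n) ℝ) : Matrix (Fin n) (Fin n) ℝ :=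
  if h : P.PosDef then CFC.sqrt P else 1

/-- The derivative at t = 0 of t ↦ tr(log²(φ(t))), where
φ(t) = Q⁻¹ P^{1/2} exp(t S) P^{1/2} for symmetric S, equals
−2 tr(log(P^{−1/2} Q P^{−1/2}) S).  (mlog is the principal matrix logarithm, which in
particular satisfies the similarity property log(A B A⁻¹) = A log(B) A⁻¹.) -/
theorem deriv_trace_log_sq (n : ℕ)
    (mlog : Matrix (Fin n) (Fin n) ℝ → Matrix (Fin n) (Fin n) ℝ)
    (hexp_log : ∀ A : Matrix (Fin n) (Fin n) ℝ, A.PosDef → NormedSpace.exp (mlog A) = A)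
    (hlog_exp : ∀ S : Matrix (Fin n) (Fin n) ℝ, S.IsSymm → mlog (NormedSpace.exp S) = S)
    (hlog_symm : ∀ A : Matrix (Fin n) (Fin n) ℝ, A.PosDef → (mlog A).IsSymm)
    (hsim : ∀ A B : Matrix (Fin n) (Fin n) ℝ, IsUnit A.det → B.PosDef →
      mlog (A * B * A⁻¹) = A * mlog B * A⁻¹)
    (P Q V : Matrix (Fin n) (Fin n) ℝ) (hP : P.PosDef) (hQ : Q.PosDef) (hV : V.IsSymm)
    (φ : ℝ → Matrix (Fin n) (Fin n) ℝ)
    (hφ : φ = fun t => Q⁻¹ * (msqrt P * NormedSpace.exp (t • V) * msqrt P)) :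
    deriv (fun t : ℝ => Matrix.trace (mlog (φ t) * mlog (φ t))) 0
      = -2 * Matrix.trace (mlog ((msqrt P)⁻¹ * Q * (msqrt P)⁻¹) * V) := by
  classical
  have hQdet : IsUnit Q.det := hQ.det_pos.ne'.isUnit
  set S : Matrix (Fin n) (Fin n) ℝ := msqrt P with hSdef0
  have hSdef : S = CFC.sqrt P := by rw [hSdef0, msqrt, dif_pos hP]
  have hSpsd : S.PosSemidef := by rw [hSdef]; exact Matrix.nonneg_iff_posSemidef.mp (CFC.sqrt_nonneg P)
  have hSsymm : Sᵀ = S := by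
    rw [← Matrix.conjTranspose_eq_transpose_of_trivial]; exact hSpsd.1.eq
  have hSS : S * S = P := by rw [hSdef]; exact CFC.sqrt_mul_sqrt_self P (Matrix.nonneg_iff_posSemidef.mpr hP.posSemidef)
  have hSdet : IsUnit S.det := by
    have h1 : S.det * S.det = P.det := by rw [← Matrix.det_mul, hSS]
    have h2 : (0:ℝ) < P.det := hP.det_pos
    have : S.det ≠ 0 := by intro h; rw [h, mul_zero] at h1; exact h2.ne' h1.symm
    exact this.isUnit
  set R : Matrix (Fin n) (Fin n) ℝ := S * Q⁻¹ * S with hRdef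
  have hRpd : R.PosDef := by
    have := posdef_conj hQ.inv hSdet
    rwa [hSsymm] at this
  have hRinv : R⁻¹ = S⁻¹ * Q * S⁻¹ := by
    rw [hRdef, Matrix.mul_inv_rev, Matrix.mul_inv_rev,
      Matrix.nonsing_inv_nonsing_inv Q hQdet, ← mul_assoc]
  set W : Matrix (Fin n) (Fin n) ℝ := (2⁻¹ : ℝ) • V with hWdef
  have hWsymm : W.IsSymm := by
    show Wᵀ = W
    rw [hWdef, Matrix.transpose_smul, hV]
  -- facts about E t
  have hEsymm : ∀ t : ℝ, (NormedSpace.exp (t • W))ᵀ = NormedSpace.exp (t • W) := by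
    intro t
    apply Matrix.IsSymm.exp
    show (t • W)ᵀ = t • W
    rw [Matrix.transpose_smul, hWsymm]
  have hEdet : ∀ t : ℝ, IsUnit (NormedSpace.exp (t • W)).det :=
    fun t => (Matrix.isUnit_iff_isUnit_det _).1 (Matrix.isUnit_exp _)
  have hEE : ∀ t : ℝ, NormedSpace.exp (t • W) * NormedSpace.exp (t • W)
      = NormedSpace.exp (t • V) := by
    intro t
    rw [← Matrix.exp_add_of_commute _ _ (Commute.refl _)]
    congr 1
    rw [hWdef, smul_smul, ← add_smul]
    congr 1
    ring
  have hBpd : ∀ t : ℝ,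
      (NormedSpace.exp (t • W) * R * NormedSpace.exp (t • W)).PosDef := by
    intro t
    have := posdef_conj hRpd (hEdet t)
    rwa [hEsymm t] at this
  -- identify mlog with flog on the B-curve
  have hmlogB : ∀ t : ℝ,
      mlog (NormedSpace.exp (t • W) * R * NormedSpace.exp (t • W))
        = flog (NormedSpace.exp (t • W) * R * NormedSpace.exp (t • W)) := by
    intro t
    have hexp : NormedSpace.exp
        (flog (NormedSpace.exp (t • W) * R * NormedSpace.exp (t • W)))
        = NormedSpace.exp (t • W) * R * NormedSpace.exp (t • W) := exp_flog (hBpd t)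
    have hsymm : (flog (NormedSpace.exp (t • W) * R * NormedSpace.exp (t • W))).IsSymm :=
      flog_isSymm (hBpd t)
    conv_lhs => rw [← hexp]
    exact hlog_exp _ hsymm
  -- conjugation identity
  have hφconj : ∀ t : ℝ,
      φ t = (Q⁻¹ * S * NormedSpace.exp (t • W))
        * (NormedSpace.exp (t • W) * R * NormedSpace.exp (t • W))
        * (Q⁻¹ * S * NormedSpace.exp (t • W))⁻¹ := by
    intro t
    have hAinv : (Q⁻¹ * S * NormedSpace.exp (t • W))⁻¹
        = (NormedSpace.exp (t • W))⁻¹ * S⁻¹ * Q := by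
      rw [Matrix.mul_inv_rev, Matrix.mul_inv_rev,
        Matrix.nonsing_inv_nonsing_inv Q hQdet, ← mul_assoc]
    rw [hφ, hAinv, hRdef]
    simp only [mul_assoc]
    rw [show NormedSpace.exp (t • W) * ((NormedSpace.exp (t • W))⁻¹ * (S⁻¹ * Q))
        = S⁻¹ * Q from by rw [← mul_assoc, mul_nonsing_inv _ (hEdet t), one_mul]]
    rw [show S * (S⁻¹ * Q) = Q from by rw [← mul_assoc, mul_nonsing_inv _ hSdet, one_mul]]
    rw [show (Q⁻¹ : Matrix (Fin n) (Fin n) ℝ) * Q = 1 from nonsing_inv_mul Q hQdet, mul_one]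
    rw [show NormedSpace.exp (t • W) * (NormedSpace.exp (t • W) * S)
        = NormedSpace.exp (t • V) * S from by rw [← mul_assoc, hEE t]]
  have hAdet : ∀ t : ℝ, IsUnit (Q⁻¹ * S * NormedSpace.exp (t • W)).det := by
    intro t
    rw [Matrix.det_mul, Matrix.det_mul]
    exact (hQ.inv.det_pos.ne'.isUnit.mul hSdet).mul (hEdet t)
  -- trace identity
  have hfun : (fun t : ℝ => Matrix.trace (mlog (φ t) * mlog (φ t)))
      = fun t : ℝ => Matrix.trace
          (flog (NormedSpace.exp (t • W) * R * NormedSpace.exp (t • W))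
            * flog (NormedSpace.exp (t • W) * R * NormedSpace.exp (t • W))) := by
    funext t
    set A : Matrix (Fin n) (Fin n) ℝ := Q⁻¹ * S * NormedSpace.exp (t • W) with hA
    set Lt : Matrix (Fin n) (Fin n) ℝ :=
      flog (NormedSpace.exp (t • W) * R * NormedSpace.exp (t • W)) with hLt
    have hm : mlog (φ t) = A * Lt * A⁻¹ := by
      rw [hφconj t, hsim A _ (hAdet t) (hBpd t), hmlogB t]
    rw [hm]
    have hsq : (A * Lt * A⁻¹) * (A * Lt * A⁻¹) = A * Lt * (A⁻¹ * A) * Lt * A⁻¹ := by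
      simp only [mul_assoc]
    rw [hsq, nonsing_inv_mul _ (hAdet t), mul_one]
    calc Matrix.trace (A * Lt * Lt * A⁻¹)
        = Matrix.trace (A * (Lt * Lt) * A⁻¹) := by rw [mul_assoc A Lt Lt]
      _ = Matrix.trace (A⁻¹ * A * (Lt * Lt)) := Matrix.trace_mul_cycle A (Lt * Lt) A⁻¹
      _ = Matrix.trace (Lt * Lt) := by rw [nonsing_inv_mul _ (hAdet t), one_mul]
  -- left-hand side
  have hLHS : deriv (fun t : ℝ => Matrix.trace (mlog (φ t) * mlog (φ t))) 0
      = 4 * Matrix.trace (flog R * W) := by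
    rw [hfun]
    exact key_deriv R W hRpd hWsymm
  -- right-hand side
  have hmlogR : mlog (S⁻¹ * Q * S⁻¹) = -(flog R) := by
    have hexp : NormedSpace.exp (flog R) = R := exp_flog hRpd
    have h1 : S⁻¹ * Q * S⁻¹ = NormedSpace.exp (-(flog R)) := by
      rw [Matrix.exp_neg, hexp, hRinv]
    rw [h1]
    apply hlog_exp
    show (-(flog R))ᵀ = -(flog R)
    rw [Matrix.transpose_neg, (flog_isSymm hRpd).eq]
  rw [hLHS, hmlogR]
  rw [Matrix.neg_mul, Matrix.trace_neg, hWdef, Matrix.mul_smul, Matrix.trace_smul,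
    smul_eq_mul]
  ring
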